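/- If f is a geodesic Leech labeling of the cycle graph C_10 on 10 vertices, then the sum of the labels of the 10 edges of C_10 equals 85. -/

import Mathlib

open SimpleGraph Finset
open Fin.NatCast Fin.CommRing

/-- A walk in `G` is a *geodesic walk* if it is a nontrivial path whose length equals
the distance in `G` between its endpoints. -/
def SimpleGraph.IsGeodesicWalk {V : Type*} (G : SimpleGraph V) {u v : V}
    (p : G.Walk u v) : Prop :=
  p.IsPath ∧ p.length = G.dist u v ∧ 0 < p.length

/-- The geodesic paths of `G`, where a path and its reverse are identified by
recording the (finite) set of edges of the path.  (A nontrivial path is determined,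
up to reversal, by its edge set.) -/
def SimpleGraph.geodesicPathSets {V : Type*} [DecidableEq V] (G : SimpleGraph V) :
    Set (Finset (Sym2 V)) :=
  {S | ∃ (u v : V) (p : G.Walk u v), G.IsGeodesicWalk p ∧ p.edges.toFinset = S}

/-- The geodesic path number `t_gp(G)`: the number of geodesic paths of `G`. -/
noncomputable def SimpleGraph.tgp {V : Type*} [DecidableEq V] (G : SimpleGraph V) : ℕ :=
  G.geodesicPathSets.ncard

/-- `f` is a geodesic Leech labeling of `G`: an edge labeling by positive integers such
that the weights of the geodesic paths of `G` are exactly `1, 2, …, t_gp(G)`,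
each occurring exactly once. -/
def SimpleGraph.IsGeodesicLeechLabeling {V : Type*} [DecidableEq V] (G : SimpleGraph V)
    (f : Sym2 V → ℕ) : Prop :=
  (∀ e ∈ G.edgeSet, 1 ≤ f e) ∧
    Set.BijOn (fun S => ∑ e ∈ S, f e) G.geodesicPathSets (Set.Icc 1 G.tgp)

/-- If `f` is a geodesic Leech labeling of the cycle on `10` vertices, then the labels
of its `10` edges sum to `85`. -/
abbrev G10 := SimpleGraph.cycleGraph 10

lemma adj_succ (u : Fin 10) : G10.Adj u (u + 1) :=
  cycleGraph_adj.mpr (Or.inr (by ring))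

def fwdList (u : Fin 10) (L : ℕ) : List (Sym2 (Fin 10)) :=
  (List.range L).map (fun i => s(u + (i : ℕ), u + ((i + 1 : ℕ) : Fin 10)))

def bwdList (u : Fin 10) (L : ℕ) : List (Sym2 (Fin 10)) :=
  (List.range L).map (fun i => s(u - (i : ℕ), u - ((i + 1 : ℕ) : Fin 10)))

lemma fwdList_succ (u : Fin 10) (L : ℕ) :
    fwdList u (L + 1) = s(u, u + 1) :: fwdList (u + 1) L := by
  simp only [fwdList, List.range_succ_eq_map, List.map_cons, List.map_map]
  congr 1
  · norm_num
  · apply List.map_congr_left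
    intro i _
    simp only [Function.comp_apply]
    congr 1 <;> push_cast <;> ring

def fwd (u : Fin 10) : (L : ℕ) → G10.Walk u (u + (L : ℕ))
  | 0 => Walk.nil.copy rfl (by simp)
  | L + 1 => (Walk.cons (adj_succ u) (fwd (u + 1) L)).copy rfl (by push_cast; ring)

lemma length_fwd (u : Fin 10) (L : ℕ) : (fwd u L).length = L := by
  induction L generalizing u with
  | zero => simp [fwd]
  | succ L ih => simp [fwd, ih]

lemma edges_fwd (u : Fin 10) (L : ℕ) : (fwd u L).edges = fwdList u L := by
  induction L generalizing u with
  | zero => simp [fwd, fwdList]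
  | succ L ih => simp [fwd, ih, fwdList_succ]

lemma support_fwd (u : Fin 10) (L : ℕ) :
    (fwd u L).support = (List.range (L + 1)).map (fun i => u + (i : ℕ)) := by
  induction L generalizing u with
  | zero =>
    simp [fwd, List.range_succ]
  | succ L ih =>
    simp only [fwd, Walk.support_copy, Walk.support_cons, ih,
      List.range_succ_eq_map (n := L + 1), List.map_cons, List.map_map]
    congr 1
    · norm_num
    · apply List.map_congr_left
      intro i _
      simp only [Function.comp_apply]
      push_cast
      ring

lemma isPath_fwd (u : Fin 10) (L : ℕ) (hL : L ≤ 9) : (fwd u L).IsPath := by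
  rw [Walk.isPath_def, support_fwd]
  refine List.Nodup.map_on ?_ List.nodup_range
  intro i hi j hj hij
  rw [List.mem_range] at hi hj
  have := add_left_cancel hij
  have hval : ((i : ℕ) : Fin 10).val = ((j : ℕ) : Fin 10).val := by rw [this]
  simp only [Fin.val_natCast] at hval
  omega

lemma bwdList_succ (u : Fin 10) (L : ℕ) :
    bwdList u (L + 1) = s(u, u - 1) :: bwdList (u - 1) L := by
  simp only [bwdList, List.range_succ_eq_map, List.map_cons, List.map_map]
  congr 1
  · norm_num
  · apply List.map_congr_left
    intro i _
    simp only [Function.comp_apply]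
    congr 1 <;> (push_cast; ring)

lemma fwdList_succ' (u : Fin 10) (L : ℕ) :
    fwdList u (L + 1) = fwdList u L ++ [s(u + (L : ℕ), u + ((L + 1 : ℕ) : Fin 10))] := by
  simp [fwdList, List.range_succ]

lemma bwd_fwd (L : ℕ) (u : Fin 10) :
    (bwdList u L).toFinset = (fwdList (u - (L : ℕ)) L).toFinset := by
  induction L generalizing u with
  | zero => simp [bwdList, fwdList]
  | succ L ih =>
    rw [bwdList_succ, fwdList_succ']
    simp only [List.toFinset_cons, List.toFinset_append, List.toFinset_cons,
      List.toFinset_nil, LawfulSingleton.insert_empty_eq]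
    rw [ih (u - 1)]
    have h1 : u - ((L + 1 : ℕ) : Fin 10) + (L : ℕ) = u - 1 := by push_cast; ring
    have h2 : u - ((L + 1 : ℕ) : Fin 10) + ((L + 1 : ℕ) : Fin 10) = u := by push_cast; ring
    have h3 : (u - 1) - ((L : ℕ) : Fin 10) = u - ((L + 1 : ℕ) : Fin 10) := by push_cast; ring
    rw [h1, h2, h3]
    rw [Sym2.eq_swap (a := u - 1), Finset.union_comm, ← Finset.insert_eq]

lemma walk_struct {u v : Fin 10} (p : G10.Walk u v) :
    ∃ b ≤ p.length, v - u + ((2 * b : ℕ) : Fin 10) = ((p.length : ℕ) : Fin 10) ∧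
      (b = 0 → p.edges = fwdList u p.length) ∧
      (b = p.length → p.edges = bwdList u p.length) := by
  induction p with
  | nil => exact ⟨0, le_refl _, by norm_num, fun _ => by simp [fwdList], fun _ => by simp [bwdList]⟩
  | @cons u w v h q ih =>
    obtain ⟨b, hb, hc, hf, hw⟩ := ih
    rcases cycleGraph_adj.mp h with h1 | h1
    · -- u - w = 1, so w = u - 1
      have hw1 : w = u - 1 := by linear_combination -h1
      subst hw1
      refine ⟨b + 1, by simp [Walk.length_cons]; omega, ?_, ?_, ?_⟩
      · rw [Walk.length_cons]
        push_cast at hc ⊢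
        linear_combination hc
      · intro hb0; omega
      · intro hbL
        rw [Walk.length_cons] at hbL ⊢
        have hbq : b = q.length := by omega
        rw [Walk.edges_cons, bwdList_succ, hw hbq]
    · -- w - u = 1, so w = u + 1
      have hw1 : w = u + 1 := by linear_combination h1
      subst hw1
      refine ⟨b, by simp [Walk.length_cons]; omega, ?_, ?_, ?_⟩
      · rw [Walk.length_cons]
        push_cast at hc ⊢
        linear_combination hc
      · intro hb0
        rw [Walk.length_cons, Walk.edges_cons, fwdList_succ, hf hb0]
      · intro hbL
        rw [Walk.length_cons] at hbL
        omega

lemma cong_val {x : Fin 10} {a L : ℕ} (h : x + ((a : ℕ) : Fin 10) = ((L : ℕ) : Fin 10)) :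
    (x.val + a) % 10 = L % 10 := by
  have := congrArg Fin.val h
  simpa [Fin.val_add, Fin.val_natCast, Nat.add_mod] using this

lemma dist_fwd (u : Fin 10) (d : ℕ) (h1 : 1 ≤ d) (h5 : d ≤ 5) :
    G10.dist u (u + (d : ℕ)) = d := by
  refine le_antisymm (le_trans (SimpleGraph.dist_le (fwd u d)) (by rw [length_fwd])) ?_
  have hreach : G10.Reachable u (u + (d : ℕ)) := ⟨fwd u d⟩
  obtain ⟨q, hq⟩ := hreach.exists_walk_length_eq_dist
  obtain ⟨b, hb, hc, -, -⟩ := walk_struct q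
  have hd : (u + (d : ℕ) - u) = ((d : ℕ) : Fin 10) := by ring
  rw [hd] at hc
  have h2 : ((((d : ℕ) : Fin 10)) + ((2 * b : ℕ) : Fin 10)) = ((q.length : ℕ) : Fin 10) := hc
  have h3 : (((d : ℕ) : Fin 10).val + 2 * b) % 10 = q.length % 10 := cong_val h2
  rw [Fin.val_natCast] at h3
  rw [← hq]
  omega

def arcs : Finset (Finset (Sym2 (Fin 10))) :=
  ((Finset.univ : Finset (Fin 10)) ×ˢ Finset.Icc 1 5).image
    (fun q => (fwdList q.1 q.2).toFinset)

lemma geo_eq : (SimpleGraph.cycleGraph 10).geodesicPathSets = ↑arcs := by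
  ext S
  constructor
  · rintro ⟨u, v, p, ⟨hpath, hlen, hpos⟩, rfl⟩
    have hne : u ≠ v := by
      rintro rfl
      rw [SimpleGraph.dist_self] at hlen
      omega
    set d := (v - u).val with hd
    have hd1 : 1 ≤ d := by
      have h0 : v - u ≠ 0 := sub_ne_zero_of_ne (Ne.symm hne)
      have : (v - u).val ≠ 0 := fun h => h0 (Fin.ext (by simp [h]))
      omega
    have hd9 : d ≤ 9 := by have := (v - u).isLt; omega
    have hcast : ((d : ℕ) : Fin 10) = v - u := Fin.cast_val_eq_self _
    -- upper bound 1
    have hu1 : (cycleGraph 10).dist u v ≤ d := by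
      have he : u + ((d : ℕ) : Fin 10) = v := by rw [hcast]; ring
      have := SimpleGraph.dist_le ((fwd u d).copy rfl he)
      rwa [Walk.length_copy, length_fwd] at this
    -- upper bound 2
    have hu2 : (cycleGraph 10).dist u v ≤ 10 - d := by
      have he : v + (((10 - d : ℕ)) : Fin 10) = u := by
        rw [Nat.cast_sub (by omega : d ≤ 10)]
        have : ((10 : ℕ) : Fin 10) = 0 := Fin.natCast_self 10
        rw [this, hcast]
        ring
      have := SimpleGraph.dist_le (((fwd v (10 - d)).copy rfl he).reverse)
      rwa [Walk.length_reverse, Walk.length_copy, length_fwd] at this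
    rw [← hlen] at hu1 hu2
    obtain ⟨b, hb, hc, hf, hbw⟩ := walk_struct p
    have hval := cong_val hc
    have hL5 : p.length ≤ 5 := by omega
    have hcases : b = 0 ∧ p.length = d ∨ b = p.length := by omega
    rw [Finset.mem_coe, arcs, Finset.mem_image]
    rcases hcases with ⟨hb0, hLd⟩ | hbL
    · exact ⟨(u, p.length), by
        simp only [Finset.mem_product, Finset.mem_univ, Finset.mem_Icc, true_and]
        omega, by rw [hf hb0]⟩
    · refine ⟨(u - (p.length : ℕ), p.length), by
        simp only [Finset.mem_product, Finset.mem_univ, Finset.mem_Icc, true_and]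
        omega, ?_⟩
      rw [hbw hbL, bwd_fwd]
  · rintro hS
    rw [Finset.mem_coe, arcs, Finset.mem_image] at hS
    obtain ⟨⟨u, L⟩, hm, rfl⟩ := hS
    simp only [Finset.mem_product, Finset.mem_univ, Finset.mem_Icc, true_and] at hm
    refine ⟨u, u + (L : ℕ), fwd u L, ⟨isPath_fwd u L (by omega), ?_, ?_⟩, by rw [edges_fwd]⟩
    · rw [length_fwd, dist_fwd u L hm.1 hm.2]
    · rw [length_fwd]; omega

lemma arcs_card : arcs.card = 50 := by decide

def E10 : Finset (Sym2 (Fin 10)) := (fwdList 0 10).toFinset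

set_option maxRecDepth 10000 in
lemma edge_iff : ∀ e : Sym2 (Fin 10), e ∈ (SimpleGraph.cycleGraph 10).edgeSet ↔ e ∈ E10 := by
  decide

set_option maxRecDepth 40000 in
lemma count15 : ∀ e ∈ E10, (arcs.filter (fun S => e ∈ S)).card = 15 := by decide

lemma arcs_subset : ∀ S ∈ arcs, S ⊆ E10 := by
  intro S hS
  rw [arcs, Finset.mem_image] at hS
  obtain ⟨⟨u, L⟩, -, rfl⟩ := hS
  intro e he
  rw [List.mem_toFinset, ← edges_fwd] at he
  exact (edge_iff e).mp ((fwd u L).edges_subset_edgeSet he)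

lemma icc_sum : ∑ k ∈ Finset.Icc 1 50, k = 1275 := by decide

theorem statement_7 (f : Sym2 (Fin 10) → ℕ)
    (hf : (SimpleGraph.cycleGraph 10).IsGeodesicLeechLabeling f) :
    ∑ e ∈ (SimpleGraph.cycleGraph 10).edgeFinset, f e = 85 := by
  have htgp : (SimpleGraph.cycleGraph 10).tgp = 50 := by
    rw [SimpleGraph.tgp, geo_eq, Set.ncard_coe_finset, arcs_card]
  have hE : (SimpleGraph.cycleGraph 10).edgeFinset = E10 := by
    ext e
    rw [mem_edgeFinset]
    exact edge_iff e
  have hbij := hf.2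
  rw [geo_eq, htgp] at hbij
  have hsum : ∑ S ∈ arcs, (∑ e ∈ S, f e) = ∑ k ∈ Finset.Icc 1 50, k := by
    apply Finset.sum_bij (i := fun S _ => ∑ e ∈ S, f e)
    · intro S hS
      rw [Finset.mem_Icc]
      have := hbij.mapsTo (Finset.mem_coe.mpr hS)
      simpa [Set.mem_Icc] using this
    · intro a ha b hb h
      exact hbij.injOn (Finset.mem_coe.mpr ha) (Finset.mem_coe.mpr hb) h
    · intro k hk
      obtain ⟨S, hS, hw⟩ := hbij.surjOn (by simpa [Set.mem_Icc] using Finset.mem_Icc.mp hk)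
      exact ⟨S, Finset.mem_coe.mp hS, hw⟩
    · intro a ha
      rfl
  have hswap : ∑ S ∈ arcs, (∑ e ∈ S, f e) = 15 * ∑ e ∈ E10, f e := by
    have h1 : ∑ S ∈ arcs, (∑ e ∈ S, f e)
        = ∑ S ∈ arcs, ∑ e ∈ E10, (if e ∈ S then f e else 0) := by
      refine Finset.sum_congr rfl fun S hS => ?_
      rw [Finset.sum_ite_mem, Finset.inter_eq_right.mpr (arcs_subset S hS)]
    rw [h1, Finset.sum_comm]
    have h2 : ∀ e ∈ E10, ∑ S ∈ arcs, (if e ∈ S then f e else 0) = 15 * f e := by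
      intro e he
      rw [Finset.sum_ite, Finset.sum_const_zero, add_zero, Finset.sum_const, count15 e he,
        smul_eq_mul]
    rw [Finset.sum_congr rfl h2, ← Finset.mul_sum]
  rw [hE]
  have : 15 * ∑ e ∈ E10, f e = 1275 := by rw [← hswap, hsum, icc_sum]
  omega
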